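/- If G is a graph of order n with C_{2f}(G) = n (i.e., the partition of V(G) into singletons is a 2-fair coalition partition), then every vertex of G has degree at least n − 2. -/
import Mathlib


/-- `S` is a `k`-fair dominating set of `G`: every vertex outside `S` has exactly `k`
neighbors in `S`. -/
def SimpleGraph.KFairDom {V : Type*} (G : SimpleGraph V) (k : ℕ) (S : Set V) : Prop :=
  ∀ v ∉ S, (G.neighborSet v ∩ S).ncard = k

/-- Disjoint sets `A`, `B` form a `k`-fair coalition: neither is a `k`-fair dominating
set, but their union is. -/
def SimpleGraph.KFairCoalition {V : Type*} (G : SimpleGraph V) (k : ℕ) (A B : Set V) : Prop :=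
  Disjoint A B ∧ ¬ G.KFairDom k A ∧ ¬ G.KFairDom k B ∧ G.KFairDom k (A ∪ B)

/-- `P` is a `k`-fair coalition partition of `G`: a partition of the vertex set into
nonempty blocks, each of which is either a `k`-fair dominating set with exactly `k`
vertices or forms a `k`-fair coalition with another block. -/
def SimpleGraph.IsKFairCoalPartition {V : Type*} (G : SimpleGraph V) (k : ℕ)
    (P : Set (Set V)) : Prop :=
  (∀ A ∈ P, A.Nonempty) ∧ ⋃₀ P = Set.univ ∧ P.PairwiseDisjoint id ∧
  ∀ A ∈ P, (G.KFairDom k A ∧ A.ncard = k) ∨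
    (¬ G.KFairDom k A ∧ ∃ B ∈ P, B ≠ A ∧ G.KFairCoalition k A B)

/-- The `k`-fair coalition number `C_{kf}(G)`: the maximum size of a `k`-fair coalition
partition of `G`. -/
noncomputable def SimpleGraph.kFairCoalNum {V : Type*} (G : SimpleGraph V) (k : ℕ) : ℕ :=
  sSup {n | ∃ P : Set (Set V), G.IsKFairCoalPartition k P ∧ P.ncard = n}

/-- The `k`-fair domatic number `d_{kf}(G)`: the maximum size of a partition of the
vertex set into `k`-fair dominating sets. -/
noncomputable def SimpleGraph.kFairDomaticNum {V : Type*} (G : SimpleGraph V) (k : ℕ) : ℕ :=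
  sSup {n | ∃ P : Set (Set V), (∀ A ∈ P, A.Nonempty) ∧ ⋃₀ P = Set.univ ∧
    P.PairwiseDisjoint id ∧ (∀ A ∈ P, G.KFairDom k A) ∧ P.ncard = n}

theorem degree_ge_of_twoFairCoalNum_eq_card {V : Type*} [Fintype V] (G : SimpleGraph V)
    [DecidableRel G.Adj] (h : G.kFairCoalNum 2 = Fintype.card V) :
    ∀ v : V, Fintype.card V - 2 ≤ G.degree v := by
  classical
  intro v
  set n := Fintype.card V with hn
  set S : Set ℕ := {m | ∃ P : Set (Set V), G.IsKFairCoalPartition 2 P ∧ P.ncard = m} with hS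
  have hbdd : BddAbove S := by
    refine ⟨Fintype.card (Set V), ?_⟩
    rintro m ⟨P, _, rfl⟩
    calc P.ncard ≤ (Set.univ : Set (Set V)).ncard :=
          Set.ncard_le_ncard (Set.subset_univ P) Set.finite_univ
      _ = Fintype.card (Set V) := by rw [Set.ncard_univ, Nat.card_eq_fintype_card]
  have hnpos : 0 < n := Fintype.card_pos_iff.mpr ⟨v⟩
  have hSne : S.Nonempty := by
    by_contra hempty
    rw [Set.not_nonempty_iff_eq_empty] at hempty
    have : G.kFairCoalNum 2 = 0 := by
      rw [SimpleGraph.kFairCoalNum, ← hS, hempty, csSup_empty]; rfl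
    omega
  have hmem : n ∈ S := by
    have := Nat.sSup_mem hSne hbdd
    rwa [show sSup S = n from h] at this
  obtain ⟨P, ⟨hneP, hcov, hdisj, hblocks⟩, hcard⟩ := hmem
  have hPfin : P.Finite := Set.toFinite P
  set Q : Finset (Set V) := hPfin.toFinset with hQ
  have hQmem : ∀ A : Set V, A ∈ Q ↔ A ∈ P := fun A => hPfin.mem_toFinset
  have hQcard : Q.card = n := by rw [← hcard, Set.ncard_eq_toFinset_card P hPfin]
  set t : Set V → Finset V := fun A => (Set.toFinite A).toFinset with ht
  have htmem : ∀ (A : Set V) (x : V), x ∈ t A ↔ x ∈ A := fun A x => (Set.toFinite A).mem_toFinset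
  have htcard : ∀ A : Set V, (t A).card = A.ncard := fun A =>
    (Set.ncard_eq_toFinset_card A (Set.toFinite A)).symm
  have hbU : Q.biUnion t = Finset.univ := by
    ext x
    simp only [Finset.mem_biUnion, Finset.mem_univ, iff_true]
    have hx : x ∈ ⋃₀ P := by rw [hcov]; trivial
    obtain ⟨A, hAP, hxA⟩ := hx
    exact ⟨A, (hQmem A).mpr hAP, (htmem A x).mpr hxA⟩
  have hdisjt : ∀ A ∈ Q, ∀ B ∈ Q, A ≠ B → Disjoint (t A) (t B) := by
    intro A hA B hB hAB
    have := hdisj ((hQmem A).mp hA) ((hQmem B).mp hB) hAB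
    rw [Finset.disjoint_left]
    intro x hxA hxB
    exact Set.disjoint_left.mp this ((htmem A x).mp hxA) ((htmem B x).mp hxB)
  have hsum : ∑ A ∈ Q, A.ncard = n := by
    have h0 := Finset.card_biUnion hdisjt
    rw [hbU, Finset.card_univ] at h0
    calc ∑ A ∈ Q, A.ncard = ∑ A ∈ Q, (t A).card :=
          Finset.sum_congr rfl fun A _ => (htcard A).symm
      _ = n := h0.symm
  have hone : ∀ A ∈ Q, A.ncard = 1 := by
    have hle : ∀ A ∈ Q, 1 ≤ A.ncard := by
      intro A hA
      have := hneP A ((hQmem A).mp hA)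
      have := Set.ncard_pos (Set.toFinite A) |>.mpr this
      omega
    have heq : ∑ A ∈ Q, (1 : ℕ) = ∑ A ∈ Q, A.ncard := by
      rw [hsum, Finset.sum_const, smul_eq_mul, mul_one, hQcard]
    intro A hA
    exact ((Finset.sum_eq_sum_iff_of_le hle).mp heq A hA).symm
  -- the block containing v is {v}
  have hv : v ∈ ⋃₀ P := by rw [hcov]; trivial
  obtain ⟨A, hAP, hvA⟩ := hv
  have hA1 : A.ncard = 1 := hone A ((hQmem A).mpr hAP)
  obtain ⟨a, ha⟩ := Set.ncard_eq_one.mp hA1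
  have hAv : A = {v} := by
    rw [ha] at hvA ⊢
    simp at hvA
    rw [hvA]
  rcases hblocks A hAP with ⟨_, h2⟩ | ⟨_, B, hBP, hBA, _, _, _, hdom⟩
  · rw [hA1] at h2; omega
  · have hB1 : B.ncard = 1 := hone B ((hQmem B).mpr hBP)
    obtain ⟨u, hu⟩ := Set.ncard_eq_one.mp hB1
    have huv : u ≠ v := by
      intro hcontra
      apply hBA
      rw [hu, hAv, hcontra]
    have hdomD : G.KFairDom 2 ({v, u} : Set V) := by
      have : A ∪ B = ({v, u} : Set V) := by rw [hAv, hu]; rfl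
      rwa [this] at hdom
    have hDcard : ({v, u} : Set V).ncard = 2 := Set.ncard_pair fun hc => huv hc.symm
    have hadj : ∀ w : V, w ∉ ({v, u} : Set V) → G.Adj v w := by
      intro w hw
      have h2 := hdomD w hw
      have hsub : G.neighborSet w ∩ {v, u} ⊆ ({v, u} : Set V) := Set.inter_subset_right
      have : G.neighborSet w ∩ {v, u} = ({v, u} : Set V) := by
        apply Set.eq_of_subset_of_ncard_le hsub
        rw [h2, hDcard]
      have hvmem : v ∈ G.neighborSet w ∩ {v, u} := by rw [this]; left; rfl
      exact (hvmem.1).symm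
    have hsub : Set.univ \ ({v, u} : Set V) ⊆ G.neighborSet v := by
      intro w hw
      exact hadj w hw.2
    have hle : (Set.univ \ ({v, u} : Set V)).ncard ≤ (G.neighborSet v).ncard :=
      Set.ncard_le_ncard hsub (Set.toFinite _)
    have hdiff : (Set.univ \ ({v, u} : Set V)).ncard = n - 2 := by
      rw [Set.ncard_diff (Set.subset_univ _), Set.ncard_univ, hDcard,
        Nat.card_eq_fintype_card]
    have hdeg : (G.neighborSet v).ncard = G.degree v := by
      rw [SimpleGraph.degree, ← Set.ncard_coe_finset]
      congr 1
      ext w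
      simp
    omega
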